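/- Let G be a finite directed graph with N vertices and integer edge weights (second coordinate) bounded by W, in which every simple cycle C satisfies w₂(C) ≥ -|C|·ε + t for some fixed t > 0 and ε > 0. Then for every K ∈ ℕ there exists k ∈ ℕ such that every path of length k in G satisfies w₂(path) > K - k·ε. -/

import Mathlib

/-- In a finite directed graph with `N` vertices whose (second-coordinate) edge
weights are bounded in absolute value by `W`, if every simple cycle `C` satisfies
`w₂(C) ≥ -|C|·ε + t` for fixed `t > 0` and `ε > 0`, then for every `K` there is a
length `k` such that every path of length `k` has second-coordinate weight
`> K - k·ε`. -/
theorem accumulate_weight {V : Type*} [Fintype V]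
    (E : V → V → Prop) (w₂ : V → V → ℤ)
    (W : ℕ) (hW : ∀ u v : V, E u v → |w₂ u v| ≤ (W : ℤ))
    (ε t : ℝ) (hε : 0 < ε) (ht : 0 < t)
    (hcyc : ∀ (n : ℕ) (c : ℕ → V), 1 ≤ n → c n = c 0 →
      (∀ i < n, E (c i) (c (i + 1))) →
      (∀ i < n, ∀ j < n, c i = c j → i = j) →
      -(n : ℝ) * ε + t ≤ ((∑ i ∈ Finset.range n, w₂ (c i) (c (i + 1)) : ℤ) : ℝ)) :
    ∀ K : ℕ, ∃ k : ℕ, ∀ π : ℕ → V,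
      (∀ i < k, E (π i) (π (i + 1))) →
      (K : ℝ) - k * ε < ((∑ i ∈ Finset.range k, w₂ (π i) (π (i + 1)) : ℤ) : ℝ) := by
  intro K
  classical
  set N := Fintype.card V with hNdef
  have main : ∀ k : ℕ, ∀ π : ℕ → V, (∀ i < k, E (π i) (π (i + 1))) →
      ((k : ℝ) / N) * t - N * W - t ≤
        ((∑ i ∈ Finset.range k, w₂ (π i) (π (i + 1)) : ℤ) : ℝ) + k * ε := by
    intro k
    induction k using Nat.strong_induction_on with
    | _ k IH =>
      intro π hπ
      have hNpos : 0 < N := Fintype.card_pos_iff.mpr ⟨π 0⟩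
      have hN' : (0:ℝ) < N := by exact_mod_cast hNpos
      have hW0 : (0:ℝ) ≤ (W:ℝ) := Nat.cast_nonneg W
      by_cases hkN : k ≤ N
      · -- base case: short path
        have hsum : (-(k:ℤ) * W) ≤ ∑ i ∈ Finset.range k, w₂ (π i) (π (i + 1)) := by
          have h := Finset.sum_le_sum
            (fun i hi => (abs_le.mp (hW _ _ (hπ i (Finset.mem_range.mp hi)))).1)
          simpa [mul_comm] using h
        have hsum' : (-(k:ℝ) * W) ≤ ((∑ i ∈ Finset.range k, w₂ (π i) (π (i+1)) : ℤ) : ℝ) := by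
          exact_mod_cast hsum
        have h4 : (k:ℝ) ≤ N := by exact_mod_cast hkN
        have h1 : (k / N : ℝ) ≤ 1 := div_le_one_of_le₀ h4 hN'.le
        have h2 : (k / N : ℝ) * t ≤ t := by nlinarith
        have h3 : (0:ℝ) ≤ (k:ℝ) * ε := by positivity
        have h5 : -(N:ℝ) * W ≤ -(k:ℝ) * W := by nlinarith
        linarith
      · -- long path: extract a simple cycle
        push_neg at hkN
        obtain ⟨a, b, hab, hfab⟩ := Fintype.exists_ne_map_eq_of_card_lt
          (fun m : Fin (N+1) => π m) (by simp [hNdef])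
        have hne : (a:ℕ) ≠ (b:ℕ) := fun hh => hab (Fin.ext hh)
        have key : ∃ j0, j0 ≤ N ∧ ∃ i0, i0 < j0 ∧ π i0 = π j0 := by
          rcases lt_or_gt_of_ne hne with h | h
          · exact ⟨b, Fin.is_le b, a, h, hfab⟩
          · exact ⟨a, Fin.is_le a, b, h, hfab.symm⟩
        obtain ⟨j0, hj0N, i0, hi0, hpi0⟩ := key
        have hPex : ∃ j, ∃ i, i < j ∧ π i = π j := ⟨j0, i0, hi0, hpi0⟩
        set j := Nat.find hPex with hjdef
        obtain ⟨i, hij, hπij⟩ := Nat.find_spec hPex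
        have hjle : j ≤ j0 := Nat.find_min' hPex ⟨i0, hi0, hpi0⟩
        have hjN : j ≤ N := hjle.trans hj0N
        have hmin : ∀ m, m < j → ¬ ∃ i, i < m ∧ π i = π m :=
          fun m hm => Nat.find_min hPex hm
        set n := j - i with hndef
        have hn1 : 1 ≤ n := by omega
        have hin : i + n = j := by omega
        have hjk : j < k := lt_of_le_of_lt hjN hkN
        -- apply the cycle hypothesis
        have hC := hcyc n (fun m => π (i + m)) hn1
          (by
            show π (i + n) = π (i + 0)
            rw [hin, Nat.add_zero]
            exact hπij.symm)
          (fun m hm => by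
            show E (π (i + m)) (π (i + (m + 1)))
            have h1 : i + (m + 1) = (i + m) + 1 := by omega
            rw [h1]
            exact hπ (i + m) (by omega))
          (fun p hp q hq hpq => by
            by_contra hpq'
            rcases Nat.lt_or_ge p q with h | h
            · exact hmin (i+q) (by omega) ⟨i+p, by omega, hpq⟩
            · have h' : q < p := by omega
              exact hmin (i+p) (by omega) ⟨i+q, by omega, hpq.symm⟩)
        simp only [← Nat.add_assoc] at hC
        -- remainder path
        set k' := k - n with hk'def
        have hkk' : k = k' + n := by omega
        set π' : ℕ → V := fun m => if m < i then π m else π (m + n) with hπ'def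
        have hagree : ∀ m, m ≤ i → π' m = π m := by
          intro m hm
          rcases lt_or_eq_of_le hm with h | h
          · simp [hπ'def, h]
          · subst h
            simp only [hπ'def, if_neg (lt_irrefl m)]
            rw [hin]
            exact hπij.symm
        have hshift : ∀ m, i ≤ m → π' m = π (m + n) := by
          intro m hm
          simp [hπ'def, Nat.not_lt.mpr hm]
        have hπ'edge : ∀ m, m < k' → E (π' m) (π' (m + 1)) := by
          intro m hm
          by_cases hmi : m < i
          · rw [hagree m hmi.le, hagree (m+1) (by omega)]
            exact hπ m (by omega)
          · push_neg at hmi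
            rw [hshift m hmi, hshift (m+1) (by omega)]
            have h1 : m + 1 + n = (m + n) + 1 := by omega
            rw [h1]
            exact hπ (m + n) (by omega)
        -- split the sum
        have hsplit : ∑ m ∈ Finset.range k, w₂ (π m) (π (m+1))
            = (∑ m ∈ Finset.range n, w₂ (π (i+m)) (π (i+m+1)))
              + ∑ m ∈ Finset.range k', w₂ (π' m) (π' (m+1)) := by
          have e1 : ∑ m ∈ Finset.range k', w₂ (π' m) (π' (m+1))
              = (∑ m ∈ Finset.range i, w₂ (π m) (π (m+1)))
                + ∑ m ∈ Finset.Ico j k, w₂ (π m) (π (m+1)) := by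
            have hik' : i ≤ k' := by omega
            rw [Finset.range_eq_Ico,
              ← Finset.sum_Ico_consecutive _ (Nat.zero_le i) hik']
            congr 1
            · rw [← Finset.range_eq_Ico]
              refine Finset.sum_congr rfl (fun m hm => ?_)
              have hmi : m < i := Finset.mem_range.mp hm
              rw [hagree m hmi.le, hagree (m+1) (by omega)]
            · have e2 : ∑ m ∈ Finset.Ico i k', w₂ (π' m) (π' (m+1))
                  = ∑ m ∈ Finset.Ico i k', w₂ (π (n+m)) (π ((n+m)+1)) := by
                refine Finset.sum_congr rfl (fun m hm => ?_)
                obtain ⟨h1, h2⟩ := Finset.mem_Ico.mp hm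
                rw [hshift m h1, hshift (m+1) (by omega)]
                have h3 : m + 1 + n = (n + m) + 1 := by omega
                have h4 : m + n = n + m := by omega
                rw [h3, h4]
              rw [e2]
              rw [show j = i + n from hin.symm, show k = k' + n from hkk']
              exact Finset.sum_Ico_add (fun m => w₂ (π m) (π (m+1))) i k' n
          have e3 : (∑ m ∈ Finset.range n, w₂ (π (i+m)) (π (i+m+1)))
              = ∑ m ∈ Finset.Ico i j, w₂ (π m) (π (m+1)) := by
            rw [Finset.sum_Ico_eq_sum_range]
          rw [e1, e3]
          rw [Finset.range_eq_Ico,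
            ← Finset.sum_Ico_consecutive _ (Nat.zero_le j) hjk.le,
            ← Finset.sum_Ico_consecutive _ (Nat.zero_le i) hij.le,
            ← Finset.range_eq_Ico]
          ring
        -- combine
        have hIH := IH k' (by omega) π' hπ'edge
        have hn' : (n:ℝ) ≤ N := by exact_mod_cast (by omega : n ≤ N)
        have hkR : (k:ℝ) = (k':ℝ) + (n:ℝ) := by exact_mod_cast hkk'
        have hSR : ((∑ m ∈ Finset.range k, w₂ (π m) (π (m+1)) : ℤ):ℝ)
            = ((∑ m ∈ Finset.range n, w₂ (π (i+m)) (π (i+m+1)) : ℤ):ℝ)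
              + ((∑ m ∈ Finset.range k', w₂ (π' m) (π' (m+1)) : ℤ):ℝ) := by
          rw [hsplit]; push_cast; ring
        have h6 : (n:ℝ)/N ≤ 1 := div_le_one_of_le₀ hn' hN'.le
        have h7 : (n:ℝ)/N * t ≤ t := by nlinarith
        have hexp : (k:ℝ)/N * t = (k':ℝ)/N * t + (n:ℝ)/N * t := by
          rw [hkR, add_div, add_mul]
        have hkeps : (k:ℝ) * ε = (k':ℝ) * ε + (n:ℝ) * ε := by rw [hkR]; ring
        linarith
  -- choose k large enough
  by_cases hV : Nonempty V
  · have hNpos : 0 < N := Fintype.card_pos_iff.mpr hV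
    have hN' : (0:ℝ) < N := by exact_mod_cast hNpos
    obtain ⟨k, hk⟩ := exists_nat_gt (((K:ℝ) + N*W + t) * N / t)
    refine ⟨k, fun π hπ => ?_⟩
    have h1 : ((K:ℝ) + N*W + t) * N < k * t := (div_lt_iff₀ ht).mp hk
    have h2 : (K:ℝ) + N*W + t < (k:ℝ)/N * t := by
      rw [div_mul_eq_mul_div, lt_div_iff₀ hN']
      linarith
    have h3 := main k π hπ
    linarith
  · exact ⟨0, fun π _ => (hV ⟨π 0⟩).elim⟩
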